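/- Let α ∈ ℝ and let P, j ∈ L²([0,1]; ℝⁿ). Then ∫_0^1 ⟨P_t, α² e^{−αt} ∫_0^t e^{αu} (Kj)_u du − α (Kj)_t⟩ dt = ∫_0^1 ⟨∫_t^1 K(s,t) (α² e^{αs} ∫_s^1 e^{−αu} P_u du − α P_s) ds, j_t⟩ dt, all integrals being absolutely convergent. -/

import Mathlib

open MeasureTheory Real Set

noncomputable def betaFn (a b : ℝ) : ℝ := Real.Gamma a * Real.Gamma b / Real.Gamma (a + b)

noncomputable def cH (H : ℝ) : ℝ := Real.sqrt (H * (2*H - 1) / betaFn (2 - 2*H) (H - 1/2))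

/-- The kernel `K(t,s)` of the fractional integral operator, for Hurst parameter `H`. -/
noncomputable def Ker (H t s : ℝ) : ℝ :=
  if s < t then cH H * s ^ ((1:ℝ)/2 - H) * ∫ u in s..t, u ^ (H - 1/2) * (u - s) ^ (H - 3/2)
  else 0

/-- The operator `(Kh)_t = ∫_0^t K(t,s) h_s ds`. -/
noncomputable def Kop {n : ℕ} (H : ℝ) (h : ℝ → EuclideanSpace ℝ (Fin n)) (t : ℝ) :
    EuclideanSpace ℝ (Fin n) :=
  ∫ s in (0:ℝ)..t, Ker H t s • h s

/-- The constant `C₂ = ∫_0^1 (v^{1/2-H} - 1)(1-v)^{-(1/2+H)} dv`. -/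
noncomputable def C2 (H : ℝ) : ℝ :=
  ∫ v in (0:ℝ)..1, (v ^ ((1:ℝ)/2 - H) - 1) * (1 - v) ^ (-(1/2 + H))

namespace Stmt10Aux

noncomputable def KC (H : ℝ) : ℝ := cH H * (1/(H - 1/2))

lemma KC_nonneg {H : ℝ} (h1 : 1/2 < H) : 0 ≤ KC H := by
  have h : (0:ℝ) < H - 1/2 := by linarith
  exact mul_nonneg (Real.sqrt_nonneg _) (div_nonneg zero_le_one h.le)

lemma ker_of_ge {H t s : ℝ} (h : t ≤ s) : Ker H t s = 0 := if_neg (not_lt.2 h)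

lemma ker_nonneg {H : ℝ} {t s : ℝ} (hs : 0 ≤ s) : 0 ≤ Ker H t s := by
  unfold Ker
  split
  · rename_i hst
    refine mul_nonneg (mul_nonneg (Real.sqrt_nonneg _) (Real.rpow_nonneg hs _)) ?_
    refine intervalIntegral.integral_nonneg (le_of_lt hst) (fun u hu => ?_)
    exact mul_nonneg (Real.rpow_nonneg (hs.trans hu.1) _)
      (Real.rpow_nonneg (by linarith [hu.1]) _)
  · exact le_refl 0

lemma ker_le {H : ℝ} (h1 : 1/2 < H) {t s : ℝ} (hs : 0 < s) (ht : t ≤ 1) :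
    Ker H t s ≤ KC H * s ^ ((1:ℝ)/2 - H) := by
  unfold Ker
  split
  · rename_i hst
    have hfactor : 0 ≤ cH H * s ^ ((1:ℝ)/2 - H) :=
      mul_nonneg (Real.sqrt_nonneg _) (Real.rpow_nonneg hs.le _)
    have key : (∫ u in s..t, u ^ (H - 1/2) * (u - s) ^ (H - 3/2)) ≤ 1/(H-1/2) := ?_
    · calc cH H * s ^ ((1:ℝ)/2 - H) * ∫ u in s..t, u ^ (H - 1/2) * (u - s) ^ (H - 3/2)
          ≤ cH H * s ^ ((1:ℝ)/2 - H) * (1/(H-1/2)) := mul_le_mul_of_nonneg_left key hfactor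
        _ = KC H * s ^ ((1:ℝ)/2 - H) := by rw [KC]; ring
    by_cases hint : IntervalIntegrable
        (fun u => u ^ (H - 1/2) * (u - s) ^ (H - 3/2)) volume s t
    · have hmono : (∫ u in s..t, u ^ (H - 1/2) * (u - s) ^ (H - 3/2))
          ≤ ∫ u in s..t, (u - s) ^ (H - 3/2) := by
        refine intervalIntegral.integral_mono_on hst.le hint ?_ (fun u hu => ?_)
        · have := (intervalIntegral.intervalIntegrable_rpow'
            (r := H - 3/2) (by linarith) (a := s - s) (b := t - s)).comp_sub_right s
          simpa using this
        · have hu0 : 0 < u := lt_of_lt_of_le hs hu.1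
          have h1u : u ≤ 1 := hu.2.trans ht
          calc u ^ (H - 1/2) * (u - s) ^ (H - 3/2)
              ≤ 1 * (u - s) ^ (H - 3/2) := by
                refine mul_le_mul_of_nonneg_right ?_ (Real.rpow_nonneg (by linarith [hu.1]) _)
                exact Real.rpow_le_one hu0.le h1u (by linarith)
            _ = (u - s) ^ (H - 3/2) := one_mul _
      have hval : (∫ u in s..t, (u - s) ^ (H - 3/2)) = (t - s) ^ (H - 1/2) / (H - 1/2) := by
        rw [intervalIntegral.integral_comp_sub_right (fun x => x ^ (H - 3/2)) s]
        rw [integral_rpow (Or.inl (by linarith))]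
        rw [sub_self]
        have e : H - 3/2 + 1 = H - 1/2 := by ring
        rw [e, Real.zero_rpow (by intro h; linarith), sub_zero]
      refine hmono.trans ?_
      rw [hval]
      rw [div_le_div_iff₀ (by linarith) (by linarith)]
      have : (t - s) ^ (H - 1/2) ≤ 1 :=
        Real.rpow_le_one (by linarith) (by linarith) (by linarith)
      nlinarith
    · rw [intervalIntegral.integral_undef hint]
      have h : (0:ℝ) < H - 1/2 := by linarith
      positivity
  · have h : (0:ℝ) < H - 1/2 := by linarith
    exact mul_nonneg (KC_nonneg h1) (Real.rpow_nonneg hs.le _)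


lemma measurable_ker (H : ℝ) : Measurable (fun p : ℝ × ℝ => Ker H p.1 p.2) := by
  have hG : Measurable (fun q : (ℝ × ℝ) × ℝ =>
      if q.2 ∈ Set.Ioc q.1.2 q.1.1 then q.2 ^ (H - 1/2) * (q.2 - q.1.2) ^ (H - 3/2) else 0) := by
    have hset : MeasurableSet {q : (ℝ × ℝ) × ℝ | q.2 ∈ Set.Ioc q.1.2 q.1.1} := by
      have : {q : (ℝ × ℝ) × ℝ | q.2 ∈ Set.Ioc q.1.2 q.1.1}
          = {q : (ℝ × ℝ) × ℝ | q.1.2 < q.2} ∩ {q : (ℝ × ℝ) × ℝ | q.2 ≤ q.1.1} := rfl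
      rw [this]
      exact (measurableSet_lt (measurable_fst.snd) measurable_snd).inter
        (measurableSet_le measurable_snd measurable_fst.fst)
    refine Measurable.ite hset ?_ measurable_const
    exact (measurable_snd.pow_const _).mul
      ((measurable_snd.sub measurable_fst.snd).pow_const _)
  have hW : Measurable (fun p : ℝ × ℝ =>
      ∫ u, (if u ∈ Set.Ioc p.2 p.1 then u ^ (H - 1/2) * (u - p.2) ^ (H - 3/2) else 0)) :=
    (hG.stronglyMeasurable.integral_prod_right').measurable
  have heq : (fun p : ℝ × ℝ => Ker H p.1 p.2) = fun p : ℝ × ℝ =>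
      if p.2 < p.1 then cH H * p.2 ^ ((1:ℝ)/2 - H) *
        ∫ u, (if u ∈ Set.Ioc p.2 p.1 then u ^ (H - 1/2) * (u - p.2) ^ (H - 3/2) else 0)
      else 0 := by
    funext p
    unfold Ker
    by_cases h : p.2 < p.1
    · rw [if_pos h, if_pos h]
      congr 1
      rw [intervalIntegral.integral_of_le h.le, ← MeasureTheory.integral_indicator measurableSet_Ioc]
      congr 1
      funext u
      simp [Set.indicator_apply]
    · rw [if_neg h, if_neg h]
  rw [heq]
  refine Measurable.ite (measurableSet_lt measurable_snd measurable_fst) ?_ measurable_const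
  exact (measurable_const.mul (measurable_snd.pow_const _)).mul hW

variable (H α : ℝ)

noncomputable def EE (t s : ℝ) : ℝ :=
  ∫ u, (if u ∈ Set.Ioc s t then Real.exp (α*u) * Ker H u s else 0)

lemma measurable_EE : Measurable (fun p : ℝ × ℝ => EE H α p.1 p.2) := by
  have hG : Measurable (fun q : (ℝ × ℝ) × ℝ =>
      if q.2 ∈ Set.Ioc q.1.2 q.1.1 then Real.exp (α*q.2) * Ker H q.2 q.1.2 else 0) := by
    have hset : MeasurableSet {q : (ℝ × ℝ) × ℝ | q.2 ∈ Set.Ioc q.1.2 q.1.1} := by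
      have : {q : (ℝ × ℝ) × ℝ | q.2 ∈ Set.Ioc q.1.2 q.1.1}
          = {q : (ℝ × ℝ) × ℝ | q.1.2 < q.2} ∩ {q : (ℝ × ℝ) × ℝ | q.2 ≤ q.1.1} := rfl
      rw [this]
      exact (measurableSet_lt (measurable_fst.snd) measurable_snd).inter
        (measurableSet_le measurable_snd measurable_fst.fst)
    refine Measurable.ite hset ?_ measurable_const
    exact ((measurable_const.mul measurable_snd).exp).mul
      ((measurable_ker H).comp (measurable_snd.prodMk measurable_fst.snd))
  exact (hG.stronglyMeasurable.integral_prod_right').measurable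

lemma EE_set (t s : ℝ) :
    EE H α t s = ∫ u in Set.Ioc s t, Real.exp (α*u) * Ker H u s := by
  rw [EE, ← MeasureTheory.integral_indicator measurableSet_Ioc]
  congr 1
  funext u
  simp [Set.indicator_apply]

lemma EE_nonneg {t s : ℝ} (hs : 0 ≤ s) : 0 ≤ EE H α t s := by
  refine MeasureTheory.integral_nonneg (fun u => ?_)
  dsimp only
  split
  · exact mul_nonneg (Real.exp_nonneg _) (ker_nonneg hs)
  · exact le_refl 0


lemma exp_le_exp_abs (c u : ℝ) (h0 : 0 ≤ u) (h1 : u ≤ 1) : Real.exp (c*u) ≤ Real.exp |c| := by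
  apply Real.exp_le_exp.2
  calc c * u ≤ |c| * u := mul_le_mul_of_nonneg_right (le_abs_self c) h0
    _ ≤ |c| * 1 := mul_le_mul_of_nonneg_left h1 (abs_nonneg c)
    _ = |c| := mul_one _

lemma integrableOn_kerSec (h1 : 1/2 < H) {s a b : ℝ} (hs : 0 < s) (ha : 0 ≤ a) (hb : b ≤ 1) :
    IntegrableOn (fun u => Real.exp (α*u) * Ker H u s) (Set.Ioc a b) := by
  have hmeas : Measurable (fun u => Real.exp (α*u) * Ker H u s) :=
    ((measurable_id.const_mul α).exp).mul
      ((measurable_ker H).comp (measurable_id.prodMk measurable_const))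
  refine Integrable.mono' (g := fun _ => Real.exp |α| * (KC H * s ^ ((1:ℝ)/2 - H)))
    (integrableOn_const measure_Ioc_lt_top.ne)
    hmeas.aestronglyMeasurable ?_
  filter_upwards [ae_restrict_mem measurableSet_Ioc] with u hu
  have hu0 : 0 ≤ u := ha.trans hu.1.le
  have hker0 : 0 ≤ Ker H u s := ker_nonneg hs.le
  rw [Real.norm_eq_abs, abs_mul, abs_of_nonneg (Real.exp_nonneg _), abs_of_nonneg hker0]
  have hkerle : Ker H u s ≤ KC H * s ^ ((1:ℝ)/2 - H) := by
    by_cases hsu : s < u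
    · exact ker_le h1 hs (hu.2.trans hb)
    · rw [ker_of_ge (not_lt.1 hsu)]
      have h : (0:ℝ) < H - 1/2 := by linarith
      exact mul_nonneg (KC_nonneg h1) (Real.rpow_nonneg hs.le _)
  exact mul_le_mul (exp_le_exp_abs α u hu0 (hu.2.trans hb)) hkerle hker0 (Real.exp_nonneg _)

lemma EE_le (h1 : 1/2 < H) {t s : ℝ} (hs : 0 < s) (ht : t ≤ 1) :
    EE H α t s ≤ Real.exp |α| * (KC H * s ^ ((1:ℝ)/2 - H)) := by
  set M := Real.exp |α| * (KC H * s ^ ((1:ℝ)/2 - H)) with hM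
  have hM0 : 0 ≤ M :=
    mul_nonneg (Real.exp_nonneg _) (mul_nonneg (KC_nonneg h1) (Real.rpow_nonneg hs.le _))
  have hint : Integrable (fun u => if u ∈ Set.Ioc s t then Real.exp (α*u) * Ker H u s else 0) := by
    have : (fun u => if u ∈ Set.Ioc s t then Real.exp (α*u) * Ker H u s else 0)
        = (Set.Ioc s t).indicator (fun u => Real.exp (α*u) * Ker H u s) := by
      funext u; simp [Set.indicator_apply]
    rw [this, integrable_indicator_iff measurableSet_Ioc]
    exact integrableOn_kerSec H α h1 hs hs.le ht
  have hle : EE H α t s ≤ ∫ u, (Set.Ioc s t).indicator (fun _ => M) u := by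
    rw [EE]
    refine MeasureTheory.integral_mono hint ?_ (fun u => ?_)
    · rw [integrable_indicator_iff measurableSet_Ioc]
      exact integrableOn_const measure_Ioc_lt_top.ne
    · rw [Set.indicator_apply]
      split
      · rename_i hu
        have hu0 : 0 ≤ u := hs.le.trans hu.1.le
        have hker0 : 0 ≤ Ker H u s := ker_nonneg hs.le
        have hkerle : Ker H u s ≤ KC H * s ^ ((1:ℝ)/2 - H) := by
          by_cases hsu : s < u
          · exact ker_le h1 hs (hu.2.trans ht)
          · rw [ker_of_ge (not_lt.1 hsu)]
            exact mul_nonneg (KC_nonneg h1) (Real.rpow_nonneg hs.le _)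
        exact mul_le_mul (exp_le_exp_abs α u hu0 (hu.2.trans ht)) hkerle hker0 (Real.exp_nonneg _)
      · exact le_refl 0
  refine hle.trans ?_
  rw [MeasureTheory.integral_indicator_const (e := M) measurableSet_Ioc]
  by_cases hst : s ≤ t
  · rw [Real.volume_real_Ioc_of_le hst, smul_eq_mul]
    have : (ENNReal.ofReal (t - s)).toReal ≤ 1 := by
      rw [ENNReal.toReal_ofReal (by linarith)]
      linarith
    nlinarith
  · rw [Set.Ioc_eq_empty (by exact fun h => hst h.le), measureReal_empty]
    simp [hM0]

noncomputable def ll (t s : ℝ) : ℝ :=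
  if s < t then α^2 * Real.exp (-α*t) * EE H α t s - α * Ker H t s else 0

noncomputable def CL : ℝ := α^2 * Real.exp |α| * (Real.exp |α| * KC H) + |α| * KC H

lemma CL_nonneg (h1 : 1/2 < H) : 0 ≤ CL H α :=
  add_nonneg (mul_nonneg (mul_nonneg (sq_nonneg α) (Real.exp_nonneg _))
    (mul_nonneg (Real.exp_nonneg _) (KC_nonneg h1))) (mul_nonneg (abs_nonneg α) (KC_nonneg h1))

lemma measurable_ll : Measurable (fun p : ℝ × ℝ => ll H α p.1 p.2) := by
  refine Measurable.ite (measurableSet_lt measurable_snd measurable_fst) ?_ measurable_const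
  exact ((measurable_const.mul ((measurable_fst.const_mul (-α)).exp)).mul
    (measurable_EE H α)).sub (measurable_const.mul (measurable_ker H))

lemma ll_zero {t s : ℝ} (h : t ≤ s) : ll H α t s = 0 := if_neg (not_lt.2 h)

lemma ll_le (h1 : 1/2 < H) {t s : ℝ} (hs : 0 < s) (ht : t ≤ 1) :
    |ll H α t s| ≤ CL H α * s ^ ((1:ℝ)/2 - H) := by
  rw [ll]
  split
  · rename_i hst
    have hEE0 : 0 ≤ EE H α t s := EE_nonneg H α hs.le
    have hEEle := EE_le H α h1 hs ht
    have hK0 : 0 ≤ Ker H t s := ker_nonneg hs.le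
    have hKle := ker_le h1 hs ht
    have hexp : Real.exp (-α*t) ≤ Real.exp |α| := by
      have h0t : 0 < t := hs.trans hst
      have := exp_le_exp_abs (-α) t h0t.le ht
      rwa [abs_neg] at this
    have hA : α^2 * Real.exp (-α*t) * EE H α t s
        ≤ α^2 * Real.exp |α| * (Real.exp |α| * (KC H * s ^ ((1:ℝ)/2 - H))) := by
      have e1 : α^2 * Real.exp (-α*t) ≤ α^2 * Real.exp |α| :=
        mul_le_mul_of_nonneg_left hexp (sq_nonneg α)
      refine mul_le_mul e1 ?_ hEE0 (by positivity)
      refine hEEle.trans (le_of_eq ?_)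
      ring
    have hA0 : 0 ≤ α^2 * Real.exp (-α*t) * EE H α t s := by positivity
    calc |α^2 * Real.exp (-α*t) * EE H α t s - α * Ker H t s|
        = |α^2 * Real.exp (-α*t) * EE H α t s + -(α * Ker H t s)| := by rw [sub_eq_add_neg]
      _ ≤ |α^2 * Real.exp (-α*t) * EE H α t s| + |-(α * Ker H t s)| := abs_add_le _ _
      _ = α^2 * Real.exp (-α*t) * EE H α t s + |α| * Ker H t s := by
          rw [abs_neg, abs_of_nonneg hA0, abs_mul, abs_of_nonneg hK0]
      _ ≤ α^2 * Real.exp |α| * (Real.exp |α| * (KC H * s ^ ((1:ℝ)/2 - H)))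
            + |α| * (KC H * s ^ ((1:ℝ)/2 - H)) :=
          add_le_add hA (mul_le_mul_of_nonneg_left hKle (abs_nonneg α))
      _ = CL H α * s ^ ((1:ℝ)/2 - H) := by rw [CL]; ring
  · rw [abs_zero]
    exact mul_nonneg (CL_nonneg H α h1) (Real.rpow_nonneg hs.le _)


lemma isFiniteMeasure_restrict_Ioc01 : IsFiniteMeasure (volume.restrict (Set.Ioc (0:ℝ) 1)) := by
  constructor
  rw [Measure.restrict_apply_univ]
  exact measure_Ioc_lt_top

lemma integrable_rpow_mul {H : ℝ} (h1 : 1/2 < H) (h2 : H < 1) {g : ℝ → ℝ}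
    (hg : MemLp g 2 (volume.restrict (Set.Ioc (0:ℝ) 1))) :
    Integrable (fun s => s ^ ((1:ℝ)/2 - H) * g s) (volume.restrict (Set.Ioc (0:ℝ) 1)) := by
  set μI := volume.restrict (Set.Ioc (0:ℝ) 1) with hμI
  have hqm : AEStronglyMeasurable (fun s : ℝ => s ^ ((1:ℝ)/2 - H)) μI :=
    (measurable_id.pow_const _).aestronglyMeasurable
  have hq2 : MemLp (fun s : ℝ => s ^ ((1:ℝ)/2 - H)) 2 μI := by
    rw [memLp_two_iff_integrable_sq hqm]
    have hbase : Integrable (fun s : ℝ => s ^ ((1:ℝ) - 2*H)) μI := by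
      have h := intervalIntegral.intervalIntegrable_rpow' (r := 1 - 2*H)
        (by linarith) (a := 0) (b := 1)
      rw [intervalIntegrable_iff, Set.uIoc_of_le zero_le_one] at h
      exact h
    refine hbase.congr ?_
    filter_upwards [ae_restrict_mem measurableSet_Ioc] with s hs
    rw [← Real.rpow_natCast (s ^ ((1:ℝ)/2 - H)) 2, ← Real.rpow_mul hs.1.le]
    congr 1
    push_cast
    ring
  have hint := MeasureTheory.L2.integrable_inner (𝕜 := ℝ) (hq2.toLp _) (hg.toLp _)
  refine hint.congr ?_
  filter_upwards [hq2.coeFn_toLp, hg.coeFn_toLp] with x h1x h2x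
  rw [RCLike.inner_apply, h1x, h2x]
  simp
  ring


lemma isFiniteMeasure_restrict_Ioc (a b : ℝ) : IsFiniteMeasure (volume.restrict (Set.Ioc a b)) := by
  constructor
  rw [Measure.restrict_apply_univ]
  exact measure_Ioc_lt_top

lemma EE_self (t : ℝ) : EE H α t t = 0 := by
  rw [EE_set, Set.Ioc_self, Measure.restrict_empty, MeasureTheory.integral_zero_measure]

section Vec

variable {n : ℕ} {f : ℝ → EuclideanSpace ℝ (Fin n)}

lemma integrableOn_kerSmul (h1 : 1/2 < H) (hfm : StronglyMeasurable f)
    (hfq : Integrable (fun s => s ^ ((1:ℝ)/2 - H) * ‖f s‖) (volume.restrict (Set.Ioc (0:ℝ) 1)))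
    {t c : ℝ} (ht : t ≤ 1) (hc : c ≤ 1) :
    IntegrableOn (fun s => Ker H t s • f s) (Set.Ioc 0 c) := by
  have hmono : volume.restrict (Set.Ioc (0:ℝ) c) ≤ volume.restrict (Set.Ioc (0:ℝ) 1) :=
    Measure.restrict_mono (Set.Ioc_subset_Ioc_right hc) le_rfl
  refine Integrable.mono' (g := fun s => KC H * (s ^ ((1:ℝ)/2 - H) * ‖f s‖))
    ((hfq.const_mul (KC H)).mono_measure hmono) ?_ ?_
  · exact (((measurable_ker H).comp
      (measurable_const.prodMk measurable_id)).stronglyMeasurable.smul hfm).aestronglyMeasurable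
  · filter_upwards [ae_restrict_mem measurableSet_Ioc] with s hs
    rw [norm_smul, Real.norm_eq_abs, abs_of_nonneg (ker_nonneg hs.1.le)]
    have hker : Ker H t s ≤ KC H * s ^ ((1:ℝ)/2 - H) := by
      by_cases hst : s < t
      · exact ker_le h1 hs.1 ht
      · rw [ker_of_ge (not_lt.1 hst)]
        exact mul_nonneg (KC_nonneg h1) (Real.rpow_nonneg hs.1.le _)
    calc Ker H t s * ‖f s‖ ≤ (KC H * s ^ ((1:ℝ)/2 - H)) * ‖f s‖ :=
          mul_le_mul_of_nonneg_right hker (norm_nonneg _)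
      _ = KC H * (s ^ ((1:ℝ)/2 - H) * ‖f s‖) := by ring

lemma integrable_EEsmul (h1 : 1/2 < H) (hfm : StronglyMeasurable f)
    (hfq : Integrable (fun s => s ^ ((1:ℝ)/2 - H) * ‖f s‖) (volume.restrict (Set.Ioc (0:ℝ) 1)))
    {t c : ℝ} (ht : t ≤ 1) (hc : c ≤ 1) :
    IntegrableOn (fun s => EE H α t s • f s) (Set.Ioc 0 c) := by
  have hmono : volume.restrict (Set.Ioc (0:ℝ) c) ≤ volume.restrict (Set.Ioc (0:ℝ) 1) :=
    Measure.restrict_mono (Set.Ioc_subset_Ioc_right hc) le_rfl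
  refine Integrable.mono' (g := fun s => (Real.exp |α| * KC H) * (s ^ ((1:ℝ)/2 - H) * ‖f s‖))
    ((hfq.const_mul _).mono_measure hmono) ?_ ?_
  · exact ((((measurable_EE H α).comp
      (measurable_const.prodMk measurable_id)).stronglyMeasurable.smul hfm)).aestronglyMeasurable
  · filter_upwards [ae_restrict_mem measurableSet_Ioc] with s hs
    rw [norm_smul, Real.norm_eq_abs, abs_of_nonneg (EE_nonneg H α hs.1.le)]
    calc EE H α t s * ‖f s‖ ≤ (Real.exp |α| * (KC H * s ^ ((1:ℝ)/2 - H))) * ‖f s‖ :=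
          mul_le_mul_of_nonneg_right (EE_le H α h1 hs.1 ht) (norm_nonneg _)
      _ = (Real.exp |α| * KC H) * (s ^ ((1:ℝ)/2 - H) * ‖f s‖) := by ring

lemma integrable_llSmul (h1 : 1/2 < H) (hfm : StronglyMeasurable f)
    (hfq : Integrable (fun s => s ^ ((1:ℝ)/2 - H) * ‖f s‖) (volume.restrict (Set.Ioc (0:ℝ) 1)))
    {t c : ℝ} (ht : t ≤ 1) (hc : c ≤ 1) :
    IntegrableOn (fun s => ll H α t s • f s) (Set.Ioc 0 c) := by
  have hmono : volume.restrict (Set.Ioc (0:ℝ) c) ≤ volume.restrict (Set.Ioc (0:ℝ) 1) :=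
    Measure.restrict_mono (Set.Ioc_subset_Ioc_right hc) le_rfl
  refine Integrable.mono' (g := fun s => CL H α * (s ^ ((1:ℝ)/2 - H) * ‖f s‖))
    ((hfq.const_mul _).mono_measure hmono) ?_ ?_
  · exact ((((measurable_ll H α).comp
      (measurable_const.prodMk measurable_id)).stronglyMeasurable.smul hfm)).aestronglyMeasurable
  · filter_upwards [ae_restrict_mem measurableSet_Ioc] with s hs
    rw [norm_smul, Real.norm_eq_abs]
    calc |ll H α t s| * ‖f s‖ ≤ (CL H α * s ^ ((1:ℝ)/2 - H)) * ‖f s‖ :=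
          mul_le_mul_of_nonneg_right (ll_le H α h1 hs.1 ht) (norm_nonneg _)
      _ = CL H α * (s ^ ((1:ℝ)/2 - H) * ‖f s‖) := by ring

lemma claim1 (h1 : 1/2 < H) (h2 : H < 1) (hfm : StronglyMeasurable f)
    (hfq : Integrable (fun s => s ^ ((1:ℝ)/2 - H) * ‖f s‖) (volume.restrict (Set.Ioc (0:ℝ) 1)))
    {t : ℝ} (ht : t ∈ Set.Ioc (0:ℝ) 1) :
    (α^2 * Real.exp (-α*t)) • (∫ u in (0:ℝ)..t, Real.exp (α*u) • Kop H f u)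
      - α • Kop H f t
    = ∫ s in Set.Ioc (0:ℝ) 1, ll H α t s • f s := by
  obtain ⟨h0t, ht1⟩ := ht
  haveI := isFiniteMeasure_restrict_Ioc (0:ℝ) t
  -- Kop as a set integral over Ioc 0 t
  have hKopEq : ∀ u : ℝ, 0 < u → u ≤ t → Kop H f u = ∫ s in Set.Ioc (0:ℝ) t, Ker H u s • f s := by
    intro u hu0 hut
    have hzero : Set.EqOn (fun s => Ker H u s • f s) (fun _ => (0:EuclideanSpace ℝ (Fin n)))
        (Set.Ioc u t) := by
      intro s hs
      simp [ker_of_ge hs.1.le]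
    have hint2 : IntegrableOn (fun s => Ker H u s • f s) (Set.Ioc u t) := by
      rw [integrableOn_congr_fun hzero measurableSet_Ioc]
      exact integrableOn_zero
    have hint1 : IntegrableOn (fun s => Ker H u s • f s) (Set.Ioc 0 u) :=
      integrableOn_kerSmul H h1 hfm hfq (hut.trans ht1) (hut.trans ht1)
    have hsplit : ∫ s in Set.Ioc (0:ℝ) t, Ker H u s • f s
        = (∫ s in Set.Ioc (0:ℝ) u, Ker H u s • f s) + ∫ s in Set.Ioc u t, Ker H u s • f s := by
      rw [← MeasureTheory.setIntegral_union (Set.Ioc_disjoint_Ioc_of_le le_rfl) measurableSet_Ioc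
        hint1 hint2, Set.Ioc_union_Ioc_eq_Ioc hu0.le hut]
    have hz : ∫ s in Set.Ioc u t, Ker H u s • f s = 0 := by
      rw [MeasureTheory.setIntegral_congr_fun measurableSet_Ioc hzero]
      simp
    rw [Kop, intervalIntegral.integral_of_le hu0.le, hsplit, hz, add_zero]
  -- EE as a set integral over Ioc 0 t
  have hEEeq : ∀ s ∈ Set.Ioc (0:ℝ) t,
      (∫ u in Set.Ioc (0:ℝ) t, Real.exp (α*u) * Ker H u s) = EE H α t s := by
    intro s hs
    have hzero : Set.EqOn (fun u => Real.exp (α*u) * Ker H u s) (fun _ => (0:ℝ))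
        (Set.Ioc 0 s) := by
      intro u hu
      simp [ker_of_ge hu.2]
    have hint1 : IntegrableOn (fun u => Real.exp (α*u) * Ker H u s) (Set.Ioc 0 s) := by
      rw [integrableOn_congr_fun hzero measurableSet_Ioc]
      exact integrableOn_zero
    have hint2 : IntegrableOn (fun u => Real.exp (α*u) * Ker H u s) (Set.Ioc s t) :=
      integrableOn_kerSec H α h1 hs.1 hs.1.le ht1
    rw [← Set.Ioc_union_Ioc_eq_Ioc hs.1.le hs.2,
      MeasureTheory.setIntegral_union (Set.Ioc_disjoint_Ioc_of_le le_rfl) measurableSet_Ioc hint1 hint2,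
      MeasureTheory.setIntegral_congr_fun measurableSet_Ioc hzero, EE_set]
    simp
  -- Fubini on Ioc 0 t × Ioc 0 t
  have hFi : Integrable (Function.uncurry fun u s => (Real.exp (α*u) * Ker H u s) • f s)
      ((volume.restrict (Set.Ioc (0:ℝ) t)).prod (volume.restrict (Set.Ioc (0:ℝ) t))) := by
    have hmono : volume.restrict (Set.Ioc (0:ℝ) t) ≤ volume.restrict (Set.Ioc (0:ℝ) 1) :=
      Measure.restrict_mono (Set.Ioc_subset_Ioc_right ht1) le_rfl
    refine Integrable.mono'
      (g := fun p : ℝ × ℝ => (Real.exp |α| * KC H) * (p.2 ^ ((1:ℝ)/2 - H) * ‖f p.2‖)) ?_ ?_ ?_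
    · exact Integrable.mul_prod (integrable_const (μ := volume.restrict (Set.Ioc (0:ℝ) t)) _) (hfq.mono_measure hmono)
    · refine StronglyMeasurable.aestronglyMeasurable ?_
      refine StronglyMeasurable.smul (f := fun p : ℝ × ℝ => Real.exp (α*p.1) * Ker H p.1 p.2) ?_
        (hfm.comp_measurable measurable_snd)
      exact (((measurable_fst.const_mul α).exp).mul (measurable_ker H)).stronglyMeasurable
    · rw [Measure.prod_restrict]
      filter_upwards [ae_restrict_mem (measurableSet_Ioc.prod measurableSet_Ioc)] with p hp
      obtain ⟨hp1, hp2⟩ := hp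
      rw [Function.uncurry, norm_smul, Real.norm_eq_abs, abs_mul,
        abs_of_nonneg (Real.exp_nonneg _), abs_of_nonneg (ker_nonneg hp2.1.le)]
      have hker : Ker H p.1 p.2 ≤ KC H * p.2 ^ ((1:ℝ)/2 - H) := by
        by_cases hst : p.2 < p.1
        · exact ker_le h1 hp2.1 (hp1.2.trans ht1)
        · rw [ker_of_ge (not_lt.1 hst)]
          exact mul_nonneg (KC_nonneg h1) (Real.rpow_nonneg hp2.1.le _)
      have hexp : Real.exp (α * p.1) ≤ Real.exp |α| :=
        exp_le_exp_abs α p.1 hp1.1.le (hp1.2.trans ht1)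
      calc Real.exp (α*p.1) * Ker H p.1 p.2 * ‖f p.2‖
          ≤ (Real.exp |α| * (KC H * p.2 ^ ((1:ℝ)/2 - H))) * ‖f p.2‖ := by
            refine mul_le_mul_of_nonneg_right ?_ (norm_nonneg _)
            exact mul_le_mul hexp hker (ker_nonneg hp2.1.le) (Real.exp_nonneg _)
        _ = (Real.exp |α| * KC H) * (p.2 ^ ((1:ℝ)/2 - H) * ‖f p.2‖) := by ring
  have hswap := MeasureTheory.integral_integral_swap hFi
  -- identify the two sides of the swap
  have hL : (∫ u in Set.Ioc (0:ℝ) t, ∫ s in Set.Ioc (0:ℝ) t, (Real.exp (α*u) * Ker H u s) • f s)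
      = ∫ u in (0:ℝ)..t, Real.exp (α*u) • Kop H f u := by
    rw [intervalIntegral.integral_of_le h0t.le]
    refine MeasureTheory.setIntegral_congr_fun measurableSet_Ioc (fun u hu => ?_)
    calc (∫ s in Set.Ioc (0:ℝ) t, (Real.exp (α*u) * Ker H u s) • f s)
        = ∫ s in Set.Ioc (0:ℝ) t, Real.exp (α*u) • (Ker H u s • f s) := by
          refine MeasureTheory.setIntegral_congr_fun measurableSet_Ioc (fun s _ => ?_)
          rw [mul_smul]
      _ = Real.exp (α*u) • ∫ s in Set.Ioc (0:ℝ) t, Ker H u s • f s :=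
          MeasureTheory.integral_smul _ _
      _ = Real.exp (α*u) • Kop H f u := by rw [hKopEq u hu.1 hu.2]
  have hR : (∫ s in Set.Ioc (0:ℝ) t, ∫ u in Set.Ioc (0:ℝ) t, (Real.exp (α*u) * Ker H u s) • f s)
      = ∫ s in Set.Ioc (0:ℝ) t, EE H α t s • f s := by
    refine MeasureTheory.setIntegral_congr_fun measurableSet_Ioc (fun s hs => ?_)
    rw [integral_smul_const, hEEeq s hs]
  have hkey : (∫ u in (0:ℝ)..t, Real.exp (α*u) • Kop H f u)
      = ∫ s in Set.Ioc (0:ℝ) t, EE H α t s • f s := by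
    rw [← hL, hswap, hR]
  -- combine
  have hEEint : IntegrableOn (fun s => EE H α t s • f s) (Set.Ioc (0:ℝ) t) :=
    integrable_EEsmul H α h1 hfm hfq ht1 ht1
  have hKerint : IntegrableOn (fun s => Ker H t s • f s) (Set.Ioc (0:ℝ) t) :=
    integrableOn_kerSmul H h1 hfm hfq ht1 ht1
  have hcomb : (α^2 * Real.exp (-α*t)) • (∫ u in (0:ℝ)..t, Real.exp (α*u) • Kop H f u)
      - α • Kop H f t
      = ∫ s in Set.Ioc (0:ℝ) t, ll H α t s • f s := by
    have hsm1 : Integrable (fun s => (α^2 * Real.exp (-α*t)) • (EE H α t s • f s))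
        (volume.restrict (Set.Ioc (0:ℝ) t)) := by
      exact hEEint.smul (α^2 * Real.exp (-α*t))
    have hsm2 : Integrable (fun s => α • (Ker H t s • f s))
        (volume.restrict (Set.Ioc (0:ℝ) t)) := by
      exact hKerint.smul α
    rw [hkey, hKopEq t h0t le_rfl]
    calc (α^2 * Real.exp (-α*t)) • (∫ s in Set.Ioc (0:ℝ) t, EE H α t s • f s)
          - α • ∫ s in Set.Ioc (0:ℝ) t, Ker H t s • f s
        = (∫ s in Set.Ioc (0:ℝ) t, (α^2 * Real.exp (-α*t)) • (EE H α t s • f s))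
            - ∫ s in Set.Ioc (0:ℝ) t, α • (Ker H t s • f s) := by
          rw [MeasureTheory.integral_smul, MeasureTheory.integral_smul]
      _ = ∫ s in Set.Ioc (0:ℝ) t,
            ((α^2 * Real.exp (-α*t)) • (EE H α t s • f s) - α • (Ker H t s • f s)) :=
          (MeasureTheory.integral_sub hsm1 hsm2).symm
      _ = ∫ s in Set.Ioc (0:ℝ) t, ll H α t s • f s := by
          refine MeasureTheory.setIntegral_congr_fun measurableSet_Ioc (fun s hs => ?_)
          by_cases hst : s < t
          · rw [ll, if_pos hst, smul_smul, smul_smul, ← sub_smul]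
          · have hse : s = t := le_antisymm hs.2 (not_lt.1 hst)
            subst hse
            simp [ll_zero H α le_rfl, EE_self, ker_of_ge (le_refl s)]
  rw [hcomb]
  -- extend the domain to Ioc 0 1
  have hzero : Set.EqOn (fun s => ll H α t s • f s) (fun _ => (0:EuclideanSpace ℝ (Fin n)))
      (Set.Ioc t 1) := by
    intro s hs
    simp [ll_zero H α hs.1.le]
  have hint2 : IntegrableOn (fun s => ll H α t s • f s) (Set.Ioc t 1) := by
    rw [integrableOn_congr_fun hzero measurableSet_Ioc]
    exact integrableOn_zero
  have hint1 : IntegrableOn (fun s => ll H α t s • f s) (Set.Ioc (0:ℝ) t) :=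
    integrable_llSmul H α h1 hfm hfq ht1 ht1
  rw [← Set.Ioc_union_Ioc_eq_Ioc h0t.le ht1,
    MeasureTheory.setIntegral_union (Set.Ioc_disjoint_Ioc_of_le le_rfl) measurableSet_Ioc hint1 hint2,
    MeasureTheory.setIntegral_congr_fun measurableSet_Ioc hzero]
  simp


lemma integrable_llSmul' (h1 : 1/2 < H) (hfm : StronglyMeasurable f)
    (hfInt : Integrable f (volume.restrict (Set.Ioc (0:ℝ) 1)))
    {t : ℝ} (ht : t ∈ Set.Ioc (0:ℝ) 1) :
    Integrable (fun u => ll H α u t • f u) (volume.restrict (Set.Ioc (0:ℝ) 1)) := by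
  obtain ⟨h0t, ht1⟩ := ht
  have hmonoJ : volume.restrict (Set.Ioc t 1) ≤ volume.restrict (Set.Ioc (0:ℝ) 1) :=
    Measure.restrict_mono (Set.Ioc_subset_Ioc_left h0t.le) le_rfl
  have hzero : Set.EqOn (fun u => ll H α u t • f u)
      (fun _ => (0:EuclideanSpace ℝ (Fin n))) (Set.Ioc (0:ℝ) t) := by
    intro u hu
    simp [ll_zero H α hu.2]
  have hint1 : IntegrableOn (fun u => ll H α u t • f u) (Set.Ioc (0:ℝ) t) := by
    rw [integrableOn_congr_fun hzero measurableSet_Ioc]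
    exact integrableOn_zero
  have hint2 : IntegrableOn (fun u => ll H α u t • f u) (Set.Ioc t 1) := by
    refine Integrable.mono' (g := fun u => (CL H α * t ^ ((1:ℝ)/2 - H)) * ‖f u‖)
      ((hfInt.norm.const_mul _).mono_measure hmonoJ) ?_ ?_
    · exact (((measurable_ll H α).comp
        (measurable_id.prodMk measurable_const)).stronglyMeasurable.smul hfm).aestronglyMeasurable
    · filter_upwards [ae_restrict_mem measurableSet_Ioc] with u hu
      rw [norm_smul, Real.norm_eq_abs]
      exact mul_le_mul_of_nonneg_right (ll_le H α h1 h0t hu.2) (norm_nonneg _)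
  have := hint1.union hint2
  rwa [Set.Ioc_union_Ioc_eq_Ioc h0t.le ht1] at this

lemma claim2 (h1 : 1/2 < H) (h2 : H < 1) (hfm : StronglyMeasurable f)
    (hfInt : Integrable f (volume.restrict (Set.Ioc (0:ℝ) 1)))
    {t : ℝ} (ht : t ∈ Set.Ioc (0:ℝ) 1) :
    (∫ s in t..(1:ℝ), Ker H s t • ((α^2 * Real.exp (α*s)) • (∫ u in s..(1:ℝ), Real.exp (-α*u) • f u)
        - α • f s))
    = ∫ s in Set.Ioc (0:ℝ) 1, ll H α s t • f s := by
  obtain ⟨h0t, ht1⟩ := ht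
  haveI := isFiniteMeasure_restrict_Ioc t (1:ℝ)
  have hmonoJ : volume.restrict (Set.Ioc t 1) ≤ volume.restrict (Set.Ioc (0:ℝ) 1) :=
    Measure.restrict_mono (Set.Ioc_subset_Ioc_left h0t.le) le_rfl
  set r : ℝ := (1:ℝ)/2 - H with hr
  have hKt : ∀ {u : ℝ}, u ≤ 1 → Ker H u t ≤ KC H * t ^ r := by
    intro u hu
    by_cases htu : t < u
    · exact ker_le h1 h0t hu
    · rw [ker_of_ge (not_lt.1 htu)]
      exact mul_nonneg (KC_nonneg h1) (Real.rpow_nonneg h0t.le _)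
  have hKt0 : ∀ u : ℝ, 0 ≤ Ker H u t := fun u => ker_nonneg h0t.le
  -- the measurable version of the inner integral
  set RR : ℝ → EuclideanSpace ℝ (Fin n) :=
    fun s => ∫ u, (if u ∈ Set.Ioc s 1 then Real.exp (-α*u) • f u else 0) with hRR
  have hRRm : StronglyMeasurable RR := by
    refine StronglyMeasurable.integral_prod_right' (f := fun q : ℝ × ℝ =>
      if q.2 ∈ Set.Ioc q.1 1 then Real.exp (-α*q.2) • f q.2 else 0) ?_
    refine StronglyMeasurable.ite ?_ ?_ stronglyMeasurable_const
    · have : {q : ℝ × ℝ | q.2 ∈ Set.Ioc q.1 1}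
          = {q : ℝ × ℝ | q.1 < q.2} ∩ {q : ℝ × ℝ | q.2 ≤ 1} := rfl
      rw [this]
      exact (measurableSet_lt measurable_fst measurable_snd).inter
        (measurableSet_le measurable_snd measurable_const)
    · exact ((measurable_snd.const_mul (-α)).exp).stronglyMeasurable.smul
        (hfm.comp_measurable measurable_snd)
  have hRReq : ∀ s : ℝ, s ≤ 1 → RR s = ∫ u in s..(1:ℝ), Real.exp (-α*u) • f u := by
    intro s hs
    rw [hRR, intervalIntegral.integral_of_le hs,
      ← MeasureTheory.integral_indicator measurableSet_Ioc]
    refine integral_congr_ae (Filter.Eventually.of_forall fun u => ?_)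
    simp [Set.indicator_apply]
  set MR : ℝ := Real.exp |α| * ∫ u in Set.Ioc (0:ℝ) 1, ‖f u‖ with hMR
  have hMR0 : 0 ≤ MR :=
    mul_nonneg (Real.exp_nonneg _) (MeasureTheory.integral_nonneg (fun u => norm_nonneg _))
  have hRRbd : ∀ s ∈ Set.Ioc t 1, ‖RR s‖ ≤ MR := by
    intro s hs
    have hset : RR s = ∫ u in Set.Ioc s 1, Real.exp (-α*u) • f u := by
      rw [hRR, ← MeasureTheory.integral_indicator measurableSet_Ioc]
      refine integral_congr_ae (Filter.Eventually.of_forall fun u => ?_)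
      simp [Set.indicator_apply]
    rw [hset]
    refine (MeasureTheory.norm_integral_le_integral_norm _).trans ?_
    have hgi : Integrable (fun u => Real.exp |α| * ‖f u‖) (volume.restrict (Set.Ioc s 1)) :=
      (hfInt.norm.const_mul _).mono_measure
        (Measure.restrict_mono (Set.Ioc_subset_Ioc_left (h0t.le.trans hs.1.le)) le_rfl)
    have h2' : (∫ u in Set.Ioc s 1, ‖Real.exp (-α*u) • f u‖)
        ≤ ∫ u in Set.Ioc s 1, Real.exp |α| * ‖f u‖ := by
      refine MeasureTheory.integral_mono_of_nonneg
        (Filter.Eventually.of_forall fun u => norm_nonneg _) hgi ?_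
      filter_upwards [ae_restrict_mem measurableSet_Ioc] with u hu
      rw [norm_smul, Real.norm_eq_abs, abs_of_nonneg (Real.exp_nonneg _)]
      have he : Real.exp (-α*u) ≤ Real.exp |α| := by
        have h0u : 0 ≤ u := ((h0t.trans hs.1).trans hu.1).le
        have := exp_le_exp_abs (-α) u h0u hu.2
        rwa [abs_neg] at this
      exact mul_le_mul_of_nonneg_right he (norm_nonneg _)
    refine h2'.trans ?_
    rw [MeasureTheory.integral_const_mul, hMR]
    refine mul_le_mul_of_nonneg_left ?_ (Real.exp_nonneg _)
    refine MeasureTheory.setIntegral_mono_set hfInt.norm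
      (Filter.Eventually.of_forall fun u => norm_nonneg _) ?_
    exact HasSubset.Subset.eventuallyLE (Set.Ioc_subset_Ioc_left (h0t.trans hs.1).le)
  -- Fubini on Ioc t 1 × Ioc t 1
  set c0 : ℝ := (KC H * t ^ r) * (Real.exp |α| * Real.exp |α|) with hc0
  have hKtr0 : (0:ℝ) ≤ KC H * t ^ r :=
    mul_nonneg (KC_nonneg h1) (Real.rpow_nonneg h0t.le _)
  have hgi : Integrable (Function.uncurry fun s u =>
      (if s < u then (Ker H s t * Real.exp (α*s)) * Real.exp (-α*u) else 0) • f u)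
      ((volume.restrict (Set.Ioc t 1)).prod (volume.restrict (Set.Ioc t 1))) := by
    refine Integrable.mono' (g := fun p : ℝ × ℝ => c0 * ‖f p.2‖) ?_ ?_ ?_
    · exact Integrable.mul_prod (integrable_const (μ := volume.restrict (Set.Ioc t (1:ℝ))) _) (hfInt.norm.mono_measure hmonoJ)
    · refine StronglyMeasurable.aestronglyMeasurable ?_
      refine StronglyMeasurable.smul (f := fun p : ℝ × ℝ =>
        if p.1 < p.2 then (Ker H p.1 t * Real.exp (α*p.1)) * Real.exp (-α*p.2) else 0) ?_
        (hfm.comp_measurable measurable_snd)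
      refine Measurable.stronglyMeasurable ?_
      refine Measurable.ite (measurableSet_lt measurable_fst measurable_snd) ?_ measurable_const
      exact (((measurable_ker H).comp (measurable_fst.prodMk measurable_const)).mul
        ((measurable_fst.const_mul α).exp)).mul ((measurable_snd.const_mul (-α)).exp)
    · rw [Measure.prod_restrict]
      filter_upwards [ae_restrict_mem (measurableSet_Ioc.prod measurableSet_Ioc)] with p hp
      obtain ⟨hp1, hp2⟩ := hp
      rw [Function.uncurry]
      split
      · rw [norm_smul, Real.norm_eq_abs]
        have e1 : Real.exp (α * p.1) ≤ Real.exp |α| :=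
          exp_le_exp_abs α p.1 (h0t.le.trans hp1.1.le) hp1.2
        have e2 : Real.exp (-α * p.2) ≤ Real.exp |α| := by
          have := exp_le_exp_abs (-α) p.2 (h0t.le.trans hp2.1.le) hp2.2
          rwa [abs_neg] at this
        have habs : |Ker H p.1 t * Real.exp (α*p.1) * Real.exp (-α*p.2)|
            = Ker H p.1 t * Real.exp (α*p.1) * Real.exp (-α*p.2) :=
          abs_of_nonneg (mul_nonneg (mul_nonneg (hKt0 p.1) (Real.exp_nonneg _))
            (Real.exp_nonneg _))
        rw [habs]
        have s1 : Ker H p.1 t * Real.exp (α*p.1) ≤ (KC H * t ^ r) * Real.exp |α| :=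
          mul_le_mul (hKt hp1.2) e1 (Real.exp_nonneg _) hKtr0
        have s2 : Ker H p.1 t * Real.exp (α*p.1) * Real.exp (-α*p.2)
            ≤ (KC H * t ^ r) * Real.exp |α| * Real.exp |α| :=
          mul_le_mul s1 e2 (Real.exp_nonneg _) (mul_nonneg hKtr0 (Real.exp_nonneg _))
        calc Ker H p.1 t * Real.exp (α*p.1) * Real.exp (-α*p.2) * ‖f p.2‖
            ≤ (KC H * t ^ r) * Real.exp |α| * Real.exp |α| * ‖f p.2‖ :=
              mul_le_mul_of_nonneg_right s2 (norm_nonneg _)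
          _ = c0 * ‖f p.2‖ := by rw [hc0]; ring
      · rw [zero_smul, norm_zero]
        exact mul_nonneg (mul_nonneg hKtr0 (mul_nonneg (Real.exp_nonneg _) (Real.exp_nonneg _)))
          (norm_nonneg _)
  have hswap2 := MeasureTheory.integral_integral_swap hgi
  have hswapL : (∫ s in Set.Ioc t 1, ∫ u in Set.Ioc t 1,
      (if s < u then (Ker H s t * Real.exp (α*s)) * Real.exp (-α*u) else 0) • f u)
      = ∫ s in Set.Ioc t 1, (Ker H s t * Real.exp (α*s)) • RR s := by
    refine MeasureTheory.setIntegral_congr_fun measurableSet_Ioc (fun s hs => ?_)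
    have hind : (fun u => (if s < u then (Ker H s t * Real.exp (α*s)) * Real.exp (-α*u) else 0) • f u)
        = fun u => Set.indicator (Set.Ioi s)
          (fun u => ((Ker H s t * Real.exp (α*s)) * Real.exp (-α*u)) • f u) u := by
      funext u
      simp [Set.indicator_apply, Set.mem_Ioi, ite_smul]
    rw [hind, MeasureTheory.setIntegral_indicator measurableSet_Ioi,
      Set.Ioc_inter_Ioi, sup_eq_right.2 hs.1.le]
    simp_rw [mul_smul]
    rw [MeasureTheory.integral_smul, MeasureTheory.integral_smul, hRReq s hs.2,
      intervalIntegral.integral_of_le hs.2]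
  have hswapR : (∫ u in Set.Ioc t 1, ∫ s in Set.Ioc t 1,
      (if s < u then (Ker H s t * Real.exp (α*s)) * Real.exp (-α*u) else 0) • f u)
      = ∫ u in Set.Ioc t 1, (Real.exp (-α*u) * EE H α u t) • f u := by
    refine MeasureTheory.setIntegral_congr_fun measurableSet_Ioc (fun u hu => ?_)
    rw [integral_smul_const]
    congr 1
    have hind : (fun s => if s < u then (Ker H s t * Real.exp (α*s)) * Real.exp (-α*u) else 0)
        = fun s => Set.indicator (Set.Iio u)
          (fun s => (Ker H s t * Real.exp (α*s)) * Real.exp (-α*u)) s := by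
      funext s
      simp [Set.indicator_apply]
    rw [hind, MeasureTheory.setIntegral_indicator measurableSet_Iio]
    have hset : Set.Ioc t 1 ∩ Set.Iio u = Set.Ioo t u := by
      ext x
      simp only [Set.mem_inter_iff, Set.mem_Ioc, Set.mem_Iio, Set.mem_Ioo]
      constructor
      · rintro ⟨⟨a, _⟩, c⟩
        exact ⟨a, c⟩
      · rintro ⟨a, c⟩
        exact ⟨⟨a, c.le.trans hu.2⟩, c⟩
    rw [hset, ← MeasureTheory.integral_Ioc_eq_integral_Ioo, EE_set,
      MeasureTheory.integral_mul_const, mul_comm]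
    congr 1
    refine MeasureTheory.setIntegral_congr_fun measurableSet_Ioc (fun v _ => ?_)
    ring
  have keyswap2 : (∫ s in Set.Ioc t 1, (Ker H s t * Real.exp (α*s)) • RR s)
      = ∫ u in Set.Ioc t 1, (Real.exp (-α*u) * EE H α u t) • f u := by
    rw [← hswapL, hswap2, hswapR]
  -- base integrabilities on Ioc t 1
  have base1 : Integrable (fun s => (Ker H s t * Real.exp (α*s)) • RR s)
      (volume.restrict (Set.Ioc t 1)) := by
    refine Integrable.mono' (g := fun _ => (KC H * t ^ r * Real.exp |α|) * MR)
      (integrable_const _) ?_ ?_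
    · exact ((((measurable_ker H).comp (measurable_id.prodMk measurable_const)).mul
        ((measurable_id.const_mul α).exp)).stronglyMeasurable.smul hRRm).aestronglyMeasurable
    · filter_upwards [ae_restrict_mem measurableSet_Ioc] with s hs
      rw [norm_smul, Real.norm_eq_abs,
        abs_of_nonneg (mul_nonneg (hKt0 s) (Real.exp_nonneg _))]
      have e1 : Real.exp (α*s) ≤ Real.exp |α| :=
        exp_le_exp_abs α s (h0t.le.trans hs.1.le) hs.2
      have s1 : Ker H s t * Real.exp (α*s) ≤ KC H * t ^ r * Real.exp |α| :=
        mul_le_mul (hKt hs.2) e1 (Real.exp_nonneg _) hKtr0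
      exact mul_le_mul s1 (hRRbd s hs) (norm_nonneg _)
        (mul_nonneg hKtr0 (Real.exp_nonneg _))
  have base2 : Integrable (fun s => Ker H s t • f s) (volume.restrict (Set.Ioc t 1)) := by
    refine Integrable.mono' (g := fun s => (KC H * t ^ r) * ‖f s‖)
      ((hfInt.norm.const_mul _).mono_measure hmonoJ) ?_ ?_
    · exact (((measurable_ker H).comp
        (measurable_id.prodMk measurable_const)).stronglyMeasurable.smul hfm).aestronglyMeasurable
    · filter_upwards [ae_restrict_mem measurableSet_Ioc] with s hs
      rw [norm_smul, Real.norm_eq_abs, abs_of_nonneg (hKt0 s)]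
      exact mul_le_mul_of_nonneg_right (hKt hs.2) (norm_nonneg _)
  have base3 : Integrable (fun u => (Real.exp (-α*u) * EE H α u t) • f u)
      (volume.restrict (Set.Ioc t 1)) := by
    refine Integrable.mono' (g := fun u => (Real.exp |α| * (Real.exp |α| * (KC H * t ^ r))) * ‖f u‖)
      ((hfInt.norm.const_mul _).mono_measure hmonoJ) ?_ ?_
    · exact ((((measurable_id.const_mul (-α)).exp).mul
        ((measurable_EE H α).comp
          (measurable_id.prodMk measurable_const))).stronglyMeasurable.smul
        hfm).aestronglyMeasurable
    · filter_upwards [ae_restrict_mem measurableSet_Ioc] with u hu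
      rw [norm_smul, Real.norm_eq_abs, abs_mul, abs_of_nonneg (Real.exp_nonneg _),
        abs_of_nonneg (EE_nonneg H α h0t.le)]
      have e2 : Real.exp (-α*u) ≤ Real.exp |α| := by
        have := exp_le_exp_abs (-α) u (h0t.le.trans hu.1.le) hu.2
        rwa [abs_neg] at this
      have s1 : Real.exp (-α*u) * EE H α u t ≤ Real.exp |α| * (Real.exp |α| * (KC H * t ^ r)) :=
        mul_le_mul e2 (EE_le H α h1 h0t hu.2) (EE_nonneg H α h0t.le) (Real.exp_nonneg _)
      exact mul_le_mul_of_nonneg_right s1 (norm_nonneg _)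
  have hll2 : Integrable (fun u => ll H α u t • f u) (volume.restrict (Set.Ioc t 1)) := by
    refine Integrable.mono' (g := fun u => (CL H α * t ^ r) * ‖f u‖)
      ((hfInt.norm.const_mul _).mono_measure hmonoJ) ?_ ?_
    · exact (((measurable_ll H α).comp
        (measurable_id.prodMk measurable_const)).stronglyMeasurable.smul hfm).aestronglyMeasurable
    · filter_upwards [ae_restrict_mem measurableSet_Ioc] with u hu
      rw [norm_smul, Real.norm_eq_abs]
      exact mul_le_mul_of_nonneg_right (ll_le H α h1 h0t hu.2) (norm_nonneg _)
  -- final combination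
  calc (∫ s in t..(1:ℝ), Ker H s t •
        ((α^2 * Real.exp (α*s)) • (∫ u in s..(1:ℝ), Real.exp (-α*u) • f u) - α • f s))
      = ∫ s in Set.Ioc t 1, Ker H s t • ((α^2 * Real.exp (α*s)) • RR s - α • f s) := by
        rw [intervalIntegral.integral_of_le ht1]
        refine MeasureTheory.setIntegral_congr_fun measurableSet_Ioc (fun s hs => ?_)
        rw [hRReq s hs.2]
    _ = ∫ s in Set.Ioc t 1,
          (α^2 • ((Ker H s t * Real.exp (α*s)) • RR s) - α • (Ker H s t • f s)) := by
        refine MeasureTheory.setIntegral_congr_fun measurableSet_Ioc (fun s _ => ?_)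
        rw [smul_sub]
        congr 1
        · rw [smul_smul, smul_smul]
          congr 1
          ring
        · rw [smul_smul, smul_smul, mul_comm]
    _ = (∫ s in Set.Ioc t 1, α^2 • ((Ker H s t * Real.exp (α*s)) • RR s))
          - ∫ s in Set.Ioc t 1, α • (Ker H s t • f s) := by
        refine MeasureTheory.integral_sub ?_ ?_
        · exact base1.smul (α^2)
        · exact base2.smul α
    _ = α^2 • (∫ s in Set.Ioc t 1, (Ker H s t * Real.exp (α*s)) • RR s)
          - α • ∫ s in Set.Ioc t 1, Ker H s t • f s := by
        rw [MeasureTheory.integral_smul, MeasureTheory.integral_smul]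
    _ = α^2 • (∫ u in Set.Ioc t 1, (Real.exp (-α*u) * EE H α u t) • f u)
          - α • ∫ s in Set.Ioc t 1, Ker H s t • f s := by rw [keyswap2]
    _ = ∫ u in Set.Ioc t 1,
          (α^2 • ((Real.exp (-α*u) * EE H α u t) • f u) - α • (Ker H u t • f u)) := by
        rw [MeasureTheory.integral_sub (by exact base3.smul (α^2))
          (by exact base2.smul α), MeasureTheory.integral_smul,
          MeasureTheory.integral_smul]
    _ = ∫ u in Set.Ioc t 1, ll H α u t • f u := by
        refine MeasureTheory.setIntegral_congr_fun measurableSet_Ioc (fun u hu => ?_)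
        rw [smul_smul, smul_smul, ll, if_pos hu.1, sub_smul]
        congr 2
        ring
    _ = ∫ s in Set.Ioc (0:ℝ) 1, ll H α s t • f s := by
        have hzero : Set.EqOn (fun u => ll H α u t • f u)
            (fun _ => (0:EuclideanSpace ℝ (Fin n))) (Set.Ioc (0:ℝ) t) := by
          intro u hu
          simp [ll_zero H α hu.2]
        have hint1 : IntegrableOn (fun u => ll H α u t • f u) (Set.Ioc (0:ℝ) t) := by
          rw [integrableOn_congr_fun hzero measurableSet_Ioc]
          exact integrableOn_zero
        rw [← Set.Ioc_union_Ioc_eq_Ioc h0t.le ht1,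
          MeasureTheory.setIntegral_union (Set.Ioc_disjoint_Ioc_of_le le_rfl) measurableSet_Ioc hint1 hll2,
          MeasureTheory.setIntegral_congr_fun measurableSet_Ioc hzero]
        simp

end Vec

end Stmt10Aux

open Stmt10Aux

open scoped RealInnerProductSpace

/-- The adjoint (Fubini) identity (26), all integrals absolutely convergent. -/
theorem stmt_10 (H : ℝ) (hH : H ∈ Set.Ioo (1/2 : ℝ) 1) (n : ℕ) (hn : 1 ≤ n)
    (α : ℝ) (P j : ℝ → EuclideanSpace ℝ (Fin n))
    (hP : MemLp P 2 (volume.restrict (Set.Ioc (0:ℝ) 1)))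
    (hj : MemLp j 2 (volume.restrict (Set.Ioc (0:ℝ) 1))) :
    IntegrableOn
      (fun t => ⟪P t,
        (α^2 * Real.exp (-α * t)) • (∫ u in (0:ℝ)..t, Real.exp (α * u) • Kop H j u)
          - α • Kop H j t⟫) (Set.Ioc 0 1) ∧
    IntegrableOn
      (fun t => ⟪∫ s in t..(1:ℝ),
          Ker H s t • ((α^2 * Real.exp (α * s)) • (∫ u in s..(1:ℝ), Real.exp (-α * u) • P u)
            - α • P s), j t⟫) (Set.Ioc 0 1) ∧
    (∫ t in Set.Ioc (0:ℝ) 1,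
        ⟪P t,
          (α^2 * Real.exp (-α * t)) • (∫ u in (0:ℝ)..t, Real.exp (α * u) • Kop H j u)
            - α • Kop H j t⟫)
      = ∫ t in Set.Ioc (0:ℝ) 1,
          ⟪∫ s in t..(1:ℝ),
            Ker H s t • ((α^2 * Real.exp (α * s)) • (∫ u in s..(1:ℝ), Real.exp (-α * u) • P u)
              - α • P s), j t⟫ := by
  obtain ⟨h1, h2⟩ := hH
  haveI := Stmt10Aux.isFiniteMeasure_restrict_Ioc (0:ℝ) 1
  set P' : ℝ → EuclideanSpace ℝ (Fin n) := hP.1.mk P with hP'def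
  have hP'm : StronglyMeasurable P' := hP.1.stronglyMeasurable_mk
  have hPP' : P =ᵐ[volume.restrict (Set.Ioc (0:ℝ) 1)] P' := hP.1.ae_eq_mk
  have hP2 : MemLp P' 2 (volume.restrict (Set.Ioc (0:ℝ) 1)) := (memLp_congr_ae hPP').1 hP
  set j' : ℝ → EuclideanSpace ℝ (Fin n) := hj.1.mk j with hj'def
  have hj'm : StronglyMeasurable j' := hj.1.stronglyMeasurable_mk
  have hjj' : j =ᵐ[volume.restrict (Set.Ioc (0:ℝ) 1)] j' := hj.1.ae_eq_mk
  have hj2 : MemLp j' 2 (volume.restrict (Set.Ioc (0:ℝ) 1)) := (memLp_congr_ae hjj').1 hj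
  have hPint : Integrable P' (volume.restrict (Set.Ioc (0:ℝ) 1)) :=
    memLp_one_iff_integrable.1 (hP2.mono_exponent one_le_two)
  have hjint : Integrable j' (volume.restrict (Set.Ioc (0:ℝ) 1)) :=
    memLp_one_iff_integrable.1 (hj2.mono_exponent one_le_two)
  have hjq : Integrable (fun s => s ^ ((1:ℝ)/2 - H) * ‖j' s‖)
      (volume.restrict (Set.Ioc (0:ℝ) 1)) := integrable_rpow_mul h1 h2 hj2.norm
  -- the product function and its integrability
  set Φ : ℝ × ℝ → ℝ := fun p => ll H α p.1 p.2 * ⟪P' p.1, j' p.2⟫ with hΦdef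
  have hΦ : Integrable Φ
      ((volume.restrict (Set.Ioc (0:ℝ) 1)).prod (volume.restrict (Set.Ioc (0:ℝ) 1))) := by
    refine Integrable.mono'
      (g := fun p : ℝ × ℝ => ‖P' p.1‖ * (CL H α * (p.2 ^ ((1:ℝ)/2 - H) * ‖j' p.2‖))) ?_ ?_ ?_
    · exact Integrable.mul_prod hPint.norm (hjq.const_mul _)
    · exact ((measurable_ll H α).stronglyMeasurable.mul
        ((hP'm.comp_measurable measurable_fst).inner
          (hj'm.comp_measurable measurable_snd))).aestronglyMeasurable
    · rw [Measure.prod_restrict]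
      filter_upwards [ae_restrict_mem (measurableSet_Ioc.prod measurableSet_Ioc)] with p hp
      obtain ⟨hp1, hp2⟩ := hp
      rw [hΦdef, Real.norm_eq_abs, abs_mul]
      have b1 : |ll H α p.1 p.2| ≤ CL H α * p.2 ^ ((1:ℝ)/2 - H) := ll_le H α h1 hp2.1 hp1.2
      have b2 : |(⟪P' p.1, j' p.2⟫ : ℝ)| ≤ ‖P' p.1‖ * ‖j' p.2‖ := abs_real_inner_le_norm _ _
      calc |ll H α p.1 p.2| * |⟪P' p.1, j' p.2⟫|
          ≤ (CL H α * p.2 ^ ((1:ℝ)/2 - H)) * (‖P' p.1‖ * ‖j' p.2‖) :=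
            mul_le_mul b1 b2 (abs_nonneg _)
              (mul_nonneg (CL_nonneg H α h1) (Real.rpow_nonneg hp2.1.le _))
        _ = ‖P' p.1‖ * (CL H α * (p.2 ^ ((1:ℝ)/2 - H) * ‖j' p.2‖)) := by ring
  -- inner-product forms of the two claims
  have hL2 : (fun t => ⟪P' t,
        (α^2 * Real.exp (-α * t)) • (∫ u in (0:ℝ)..t, Real.exp (α * u) • Kop H j' u)
          - α • Kop H j' t⟫)
      =ᵐ[volume.restrict (Set.Ioc (0:ℝ) 1)]
      (fun t => ∫ s in Set.Ioc (0:ℝ) 1, Φ (t, s)) := by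
    filter_upwards [ae_restrict_mem measurableSet_Ioc] with t ht
    rw [claim1 H α h1 h2 hj'm hjq ht,
      ← integral_inner (integrable_llSmul H α h1 hj'm hjq ht.2 le_rfl) (P' t)]
    refine MeasureTheory.setIntegral_congr_fun measurableSet_Ioc (fun s _ => ?_)
    rw [hΦdef]
    exact real_inner_smul_right _ _ _
  have hR2 : (fun t => ⟪∫ s in t..(1:ℝ),
        Ker H s t • ((α^2 * Real.exp (α * s)) • (∫ u in s..(1:ℝ), Real.exp (-α * u) • P' u)
          - α • P' s), j' t⟫)
      =ᵐ[volume.restrict (Set.Ioc (0:ℝ) 1)]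
      (fun t => ∫ s in Set.Ioc (0:ℝ) 1, Φ (s, t)) := by
    filter_upwards [ae_restrict_mem measurableSet_Ioc] with t ht
    rw [claim2 H α h1 h2 hP'm hPint ht, real_inner_comm,
      ← integral_inner (integrable_llSmul' H α h1 hP'm hPint ht) (j' t)]
    refine MeasureTheory.setIntegral_congr_fun measurableSet_Ioc (fun s _ => ?_)
    rw [hΦdef]
    rw [real_inner_smul_right, real_inner_comm]
  -- congruence between the original functions and the primed versions
  have hKopcongr : ∀ u : ℝ, u ∈ Set.Icc (0:ℝ) 1 → Kop H j u = Kop H j' u := by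
    intro u hu
    rw [Kop, Kop, intervalIntegral.integral_of_le hu.1, intervalIntegral.integral_of_le hu.1]
    refine MeasureTheory.integral_congr_ae ?_
    have hae : j =ᵐ[volume.restrict (Set.Ioc (0:ℝ) u)] j' :=
      ae_restrict_of_ae_restrict_of_subset (Set.Ioc_subset_Ioc_right hu.2) hjj'
    exact hae.mono fun s hs => by dsimp only; rw [hs]
  have hLHScong : (fun t => ⟪P t,
        (α^2 * Real.exp (-α * t)) • (∫ u in (0:ℝ)..t, Real.exp (α * u) • Kop H j u)
          - α • Kop H j t⟫)
      =ᵐ[volume.restrict (Set.Ioc (0:ℝ) 1)]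
      (fun t => ⟪P' t,
        (α^2 * Real.exp (-α * t)) • (∫ u in (0:ℝ)..t, Real.exp (α * u) • Kop H j' u)
          - α • Kop H j' t⟫) := by
    filter_upwards [hPP', ae_restrict_mem measurableSet_Ioc] with t hPt ht
    have e1 : (∫ u in (0:ℝ)..t, Real.exp (α * u) • Kop H j u)
        = ∫ u in (0:ℝ)..t, Real.exp (α * u) • Kop H j' u := by
      refine intervalIntegral.integral_congr (fun u hu => ?_)
      rw [Set.uIcc_of_le ht.1.le] at hu
      rw [hKopcongr u ⟨hu.1, hu.2.trans ht.2⟩]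
    rw [hPt, e1, hKopcongr t ⟨ht.1.le, ht.2⟩]
  have hRcongr : ∀ t ∈ Set.Ioc (0:ℝ) 1,
      (∫ s in t..(1:ℝ), Ker H s t •
        ((α^2 * Real.exp (α * s)) • (∫ u in s..(1:ℝ), Real.exp (-α * u) • P u) - α • P s))
      = ∫ s in t..(1:ℝ), Ker H s t •
        ((α^2 * Real.exp (α * s)) • (∫ u in s..(1:ℝ), Real.exp (-α * u) • P' u) - α • P' s) := by
    intro t ht
    rw [intervalIntegral.integral_of_le ht.2, intervalIntegral.integral_of_le ht.2]
    refine MeasureTheory.integral_congr_ae ?_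
    have hPae : P =ᵐ[volume.restrict (Set.Ioc t 1)] P' :=
      ae_restrict_of_ae_restrict_of_subset (Set.Ioc_subset_Ioc_left ht.1.le) hPP'
    filter_upwards [hPae, ae_restrict_mem measurableSet_Ioc] with s hPs hsmem
    have e2 : (∫ u in s..(1:ℝ), Real.exp (-α * u) • P u)
        = ∫ u in s..(1:ℝ), Real.exp (-α * u) • P' u := by
      rw [intervalIntegral.integral_of_le hsmem.2, intervalIntegral.integral_of_le hsmem.2]
      refine MeasureTheory.integral_congr_ae ?_
      have hae : P =ᵐ[volume.restrict (Set.Ioc s 1)] P' :=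
        ae_restrict_of_ae_restrict_of_subset (Set.Ioc_subset_Ioc_left (ht.1.trans hsmem.1).le) hPP'
      exact hae.mono fun u hu => by dsimp only; rw [hu]
    rw [e2, hPs]
  have hRHScong : (fun t => ⟪∫ s in t..(1:ℝ),
        Ker H s t • ((α^2 * Real.exp (α * s)) • (∫ u in s..(1:ℝ), Real.exp (-α * u) • P u)
          - α • P s), j t⟫)
      =ᵐ[volume.restrict (Set.Ioc (0:ℝ) 1)]
      (fun t => ⟪∫ s in t..(1:ℝ),
        Ker H s t • ((α^2 * Real.exp (α * s)) • (∫ u in s..(1:ℝ), Real.exp (-α * u) • P' u)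
          - α • P' s), j' t⟫) := by
    filter_upwards [hjj', ae_restrict_mem measurableSet_Ioc] with t hjt ht
    rw [hRcongr t ht, hjt]
  -- marginal integrabilities
  have hmar1 : Integrable (fun t => ∫ s in Set.Ioc (0:ℝ) 1, Φ (t, s))
      (volume.restrict (Set.Ioc (0:ℝ) 1)) := hΦ.integral_prod_left
  have hmar2 : Integrable (fun t => ∫ s in Set.Ioc (0:ℝ) 1, Φ (s, t))
      (volume.restrict (Set.Ioc (0:ℝ) 1)) := by
    have := hΦ.swap.integral_prod_left
    simpa [Function.comp] using this
  refine ⟨?_, ?_, ?_⟩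
  · exact hmar1.congr ((hLHScong.trans hL2).symm)
  · exact hmar2.congr ((hRHScong.trans hR2).symm)
  · calc (∫ t in Set.Ioc (0:ℝ) 1, ⟪P t,
          (α^2 * Real.exp (-α * t)) • (∫ u in (0:ℝ)..t, Real.exp (α * u) • Kop H j u)
            - α • Kop H j t⟫)
        = ∫ t in Set.Ioc (0:ℝ) 1, ∫ s in Set.Ioc (0:ℝ) 1, Φ (t, s) :=
          MeasureTheory.integral_congr_ae (hLHScong.trans hL2)
      _ = ∫ s in Set.Ioc (0:ℝ) 1, ∫ t in Set.Ioc (0:ℝ) 1, Φ (t, s) :=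
          MeasureTheory.integral_integral_swap hΦ
      _ = ∫ t in Set.Ioc (0:ℝ) 1, ⟪∫ s in t..(1:ℝ),
            Ker H s t • ((α^2 * Real.exp (α * s)) • (∫ u in s..(1:ℝ), Real.exp (-α * u) • P u)
              - α • P s), j t⟫ :=
          (MeasureTheory.integral_congr_ae (hRHScong.trans hR2)).symm
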